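/- There exists a constant β > 0 such that the following holds. For every finite simple connected undirected graph G with m edges in which every vertex has degree at least 1, for every pair of vertices x, y and every natural number t with t ≤ β·m², the expected number of visits to y by the lazy simple random walk of length t started at x satisfies E[N_t^x(y)] = Σ_{i=0}^{t} Q^i(x,y) ≤ 8·d(y)·√(t+1), where Q^i denotes the i-th power of the lazy transition matrix. -/

import Mathlib

open Finset

section Defs

variable {V : Type} [Fintype V] [DecidableEq V]

/-- Transition kernel of the lazy simple random walk on `G`. -/
noncomputable def lazyStep (G : SimpleGraph V) [DecidableRel G.Adj] (u v : V) : ℝ :=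
  if u = v then 1 / 2 else if G.Adj u v then 1 / (2 * (G.degree u : ℝ)) else 0

/-- Transition matrix of the lazy simple random walk on `G`. -/
noncomputable def lazyMatrix (G : SimpleGraph V) [DecidableRel G.Adj] : Matrix V V ℝ :=
  fun u v => lazyStep G u v

/-- Law (probability mass function) of the lazy random walk of length `t` started at `x`,
as a function on trajectories `Fin (t+1) → V`. -/
noncomputable def lazyWalkLaw (G : SimpleGraph V) [DecidableRel G.Adj] (x : V) (t : ℕ)
    (f : Fin (t + 1) → V) : ℝ :=
  (if f 0 = x then 1 else 0) * ∏ i : Fin t, lazyStep G (f i.castSucc) (f i.succ)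

/-- Expectation of a random variable `N` of the trajectory, under the lazy walk law. -/
noncomputable def lazyWalkExp (G : SimpleGraph V) [DecidableRel G.Adj] (x : V) (t : ℕ)
    (N : (Fin (t + 1) → V) → ℝ) : ℝ :=
  ∑ f : Fin (t + 1) → V, lazyWalkLaw G x t f * N f

/-- Number of indices `0 ≤ i ≤ t` at which the trajectory `f` visits `y`. -/
def visits (y : V) {t : ℕ} (f : Fin (t + 1) → V) : ℕ :=
  (Finset.univ.filter fun i => f i = y).card

end Defs


set_option linter.unusedSectionVars false
set_option maxHeartbeats 1000000

section PartI
variable {V : Type} [Fintype V] [DecidableEq V] (G : SimpleGraph V) [DecidableRel G.Adj]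

lemma lazyStep_nonneg (u v : V) : 0 ≤ lazyStep G u v := by
  unfold lazyStep
  split_ifs <;> positivity

lemma lazyStep_split (u v : V) :
    lazyStep G u v = (if u = v then (1:ℝ)/2 else 0)
      + (if G.Adj u v then 1 / (2 * (G.degree u : ℝ)) else 0) := by
  unfold lazyStep
  by_cases h : u = v
  · subst h; simp [G.irrefl]
  · simp [h]

lemma degree_pos_of_adj {u v : V} (h : G.Adj u v) : 0 < G.degree u := by
  rw [G.degree_pos_iff_exists_adj]; exact ⟨v, h⟩

lemma adj_sum_eq (g : V → ℝ) (u : V) :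
    ∑ v, (if G.Adj u v then g v else 0) = ∑ v ∈ G.neighborFinset u, g v := by
  rw [SimpleGraph.neighborFinset_eq_filter, Finset.sum_filter]

lemma lazyStep_rowsum (hdeg : ∀ v : V, 1 ≤ G.degree v) (u : V) :
    ∑ v, lazyStep G u v = 1 := by
  have hd : (0:ℝ) < (G.degree u : ℝ) := by exact_mod_cast hdeg u
  simp only [lazyStep_split, Finset.sum_add_distrib]
  rw [Finset.sum_ite_eq univ u (fun _ => (1:ℝ)/2)]
  rw [adj_sum_eq]
  rw [Finset.sum_const, SimpleGraph.card_neighborFinset_eq_degree]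
  simp only [mem_univ, if_true, nsmul_eq_mul]
  field_simp
  ring

lemma lazyStep_rev (u v : V) :
    (G.degree u : ℝ) * lazyStep G u v = (G.degree v : ℝ) * lazyStep G v u := by
  unfold lazyStep
  by_cases h : u = v
  · subst h; simp
  · have h' : ¬ v = u := fun hh => h hh.symm
    simp only [h, h', if_false]
    by_cases ha : G.Adj u v
    · have ha' : G.Adj v u := ha.symm
      have hu : (0:ℝ) < (G.degree u : ℝ) := by exact_mod_cast degree_pos_of_adj G ha
      have hv : (0:ℝ) < (G.degree v : ℝ) := by exact_mod_cast degree_pos_of_adj G ha'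
      simp only [ha, ha', if_true]
      field_simp
    · have ha' : ¬ G.Adj v u := fun hh => ha hh.symm
      simp [ha, ha']

lemma pow_apply_nonneg (i : ℕ) (x y : V) : 0 ≤ ((lazyMatrix G) ^ i) x y := by
  induction i generalizing x y with
  | zero => rw [pow_zero]; by_cases h : x = y <;> simp [Matrix.one_apply, h]
  | succ n ih =>
    rw [pow_succ, Matrix.mul_apply]
    exact Finset.sum_nonneg fun z _ => mul_nonneg (ih x z) (lazyStep_nonneg G z y)

lemma pow_rowsum (hdeg : ∀ v : V, 1 ≤ G.degree v) (i : ℕ) (x : V) :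
    ∑ y, ((lazyMatrix G) ^ i) x y = 1 := by
  induction i generalizing x with
  | zero => simp [Matrix.one_apply]
  | succ n ih =>
    simp only [pow_succ, Matrix.mul_apply]
    rw [Finset.sum_comm]
    have : ∀ z : V, ∑ y, ((lazyMatrix G) ^ n) x z * lazyMatrix G z y
        = ((lazyMatrix G) ^ n) x z := by
      intro z
      rw [← Finset.mul_sum]
      have : ∑ y, lazyMatrix G z y = 1 := lazyStep_rowsum G hdeg z
      rw [this, mul_one]
    simp only [this]
    exact ih x

lemma pow_apply_le_one (hdeg : ∀ v : V, 1 ≤ G.degree v) (i : ℕ) (x y : V) :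
    ((lazyMatrix G) ^ i) x y ≤ 1 := by
  have := pow_rowsum G hdeg i x
  calc ((lazyMatrix G) ^ i) x y ≤ ∑ z, ((lazyMatrix G) ^ i) x z :=
        Finset.single_le_sum (fun z _ => pow_apply_nonneg G i x z) (mem_univ y)
    _ = 1 := this

lemma pow_rev (i : ℕ) (x y : V) :
    (G.degree x : ℝ) * ((lazyMatrix G) ^ i) x y
      = (G.degree y : ℝ) * ((lazyMatrix G) ^ i) y x := by
  induction i generalizing x y with
  | zero =>
    by_cases h : x = y
    · subst h; rfl
    · have h' : ¬ y = x := fun hh => h hh.symm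
      simp [Matrix.one_apply, h, h']
  | succ n ih =>
    conv_rhs => rw [pow_succ']
    rw [pow_succ, Matrix.mul_apply, Matrix.mul_apply,
      Finset.mul_sum, Finset.mul_sum]
    apply Finset.sum_congr rfl
    intro z _
    calc (G.degree x : ℝ) * (((lazyMatrix G) ^ n) x z * lazyMatrix G z y)
        = ((G.degree x : ℝ) * ((lazyMatrix G) ^ n) x z) * lazyMatrix G z y := by ring
      _ = ((G.degree z : ℝ) * ((lazyMatrix G) ^ n) z x) * lazyMatrix G z y := by rw [ih]
      _ = ((G.degree z : ℝ) * lazyMatrix G z y) * ((lazyMatrix G) ^ n) z x := by ring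
      _ = ((G.degree y : ℝ) * lazyMatrix G y z) * ((lazyMatrix G) ^ n) z x := by
          rw [show lazyMatrix G z y = lazyStep G z y from rfl,
            show lazyMatrix G y z = lazyStep G y z from rfl, lazyStep_rev]
      _ = (G.degree y : ℝ) * (lazyMatrix G y z * ((lazyMatrix G) ^ n) z x) := by ring

lemma lazyStep_self (u : V) : lazyStep G u u = 1/2 := by simp [lazyStep]

lemma pow_diag_pos (i : ℕ) (y : V) : 0 < ((lazyMatrix G) ^ i) y y := by
  induction i with
  | zero => simp [Matrix.one_apply]
  | succ n ih =>
    rw [pow_succ, Matrix.mul_apply]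
    have h1 : ((lazyMatrix G) ^ n) y y * lazyMatrix G y y ≤
        ∑ z, ((lazyMatrix G) ^ n) y z * lazyMatrix G z y :=
      Finset.single_le_sum (f := fun z => ((lazyMatrix G) ^ n) y z * lazyMatrix G z y)
        (fun z _ => mul_nonneg (pow_apply_nonneg G n y z) (lazyStep_nonneg G z y)) (mem_univ y)
    have h2 : 0 < ((lazyMatrix G) ^ n) y y * lazyMatrix G y y := by
      have : lazyMatrix G y y = 1/2 := lazyStep_self G y
      rw [this]; positivity
    linarith

end PartI

section PartII
variable {V : Type} [Fintype V] [DecidableEq V] (G : SimpleGraph V) [DecidableRel G.Adj]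

noncomputable def ip (f g : V → ℝ) : ℝ := ∑ v, (G.degree v : ℝ) * (f v * g v)

noncomputable def hfun (w : V) (k : ℕ) : V → ℝ :=
  fun v => ((lazyMatrix G) ^ k) v w / (G.degree w : ℝ)

noncomputable def Qop (f : V → ℝ) : V → ℝ := fun v => ∑ u, lazyStep G v u * f u

noncomputable def Pop (f : V → ℝ) : V → ℝ :=
  fun v => (∑ u ∈ G.neighborFinset v, f u) / (G.degree v : ℝ)

noncomputable def Dsum (f : V → ℝ) : ℝ := ∑ v, ∑ u ∈ G.neighborFinset v, (f v - f u)^2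

lemma Dsum_nonneg (f : V → ℝ) : 0 ≤ Dsum G f :=
  Finset.sum_nonneg fun v _ => Finset.sum_nonneg fun u _ => sq_nonneg _

lemma hfun_succ (w : V) (k : ℕ) : hfun G w (k+1) = Qop G (hfun G w k) := by
  funext v
  unfold hfun Qop
  rw [pow_succ', Matrix.mul_apply, Finset.sum_div]
  apply Finset.sum_congr rfl
  intro u _
  rw [mul_div_assoc]
  rfl

lemma Qop_eq (f : V → ℝ) (v : V) : Qop G f v = (f v + Pop G f v)/2 := by
  unfold Qop Pop
  simp only [lazyStep_split, add_mul, Finset.sum_add_distrib]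
  rw [Finset.sum_congr rfl (fun u (_ : u ∈ univ) => by
    rw [ite_mul, zero_mul] : ∀ u ∈ univ, (if v = u then (1:ℝ)/2 else 0) * f u
      = if v = u then (1:ℝ)/2 * f u else 0)]
  rw [Finset.sum_ite_eq univ v (fun u => (1:ℝ)/2 * f u)]
  simp only [mem_univ, if_true]
  rw [Finset.sum_congr rfl (fun u (_ : u ∈ univ) => by
    rw [ite_mul, zero_mul] : ∀ u ∈ univ, (if G.Adj v u then 1/(2*(G.degree v:ℝ)) else 0) * f u
      = if G.Adj v u then 1/(2*(G.degree v:ℝ)) * f u else 0)]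
  rw [adj_sum_eq]
  by_cases hd : (G.degree v : ℝ) = 0
  · have : G.neighborFinset v = ∅ := by
      rw [← SimpleGraph.card_neighborFinset_eq_degree] at hd
      exact Finset.card_eq_zero.mp (by exact_mod_cast hd)
    rw [this]
    simp only [Finset.sum_empty, zero_div, zero_mul, add_zero]
    simp [hd]
    ring
  · rw [Finset.sum_congr rfl (fun u _ => by ring : ∀ u ∈ G.neighborFinset v,
      1/(2*(G.degree v:ℝ)) * f u = f u * (1/(2*(G.degree v:ℝ))))]
    rw [← Finset.sum_mul]
    field_simp

lemma sum_neighbor_swap (g : V → ℝ) :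
    ∑ v, ∑ u ∈ G.neighborFinset v, g u = ∑ u, (G.degree u : ℝ) * g u := by
  have h1 : ∀ v, ∑ u ∈ G.neighborFinset v, g u = ∑ u, (if G.Adj v u then g u else 0) :=
    fun v => (adj_sum_eq G g v).symm
  simp only [h1]
  rw [Finset.sum_comm]
  apply Finset.sum_congr rfl
  intro u _
  rw [Finset.sum_congr rfl (fun v _ => if_congr (G.adj_comm v u) rfl rfl)]
  rw [adj_sum_eq, Finset.sum_const, SimpleGraph.card_neighborFinset_eq_degree,
    nsmul_eq_mul]

lemma ip_Pop_Pop_le (f : V → ℝ) : ip G (Pop G f) (Pop G f) ≤ ip G f f := by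
  have key : ∀ v, (G.degree v : ℝ) * (Pop G f v * Pop G f v)
      ≤ ∑ u ∈ G.neighborFinset v, (f u)^2 := by
    intro v
    by_cases hd : (G.degree v : ℝ) = 0
    · have : G.neighborFinset v = ∅ := by
        rw [← SimpleGraph.card_neighborFinset_eq_degree] at hd
        exact Finset.card_eq_zero.mp (by exact_mod_cast hd)
      unfold Pop
      rw [hd, this]
      simp
    · have hpos : (0:ℝ) < (G.degree v : ℝ) :=
        lt_of_le_of_ne (by positivity) (Ne.symm hd)
      have cs : (∑ u ∈ G.neighborFinset v, f u * 1)^2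
          ≤ (∑ u ∈ G.neighborFinset v, (f u)^2) * (∑ u ∈ G.neighborFinset v, (1:ℝ)^2) :=
        Finset.sum_mul_sq_le_sq_mul_sq _ _ _
      have hcard : (∑ u ∈ G.neighborFinset v, (1:ℝ)^2) = (G.degree v : ℝ) := by
        simp [SimpleGraph.card_neighborFinset_eq_degree]
      rw [hcard] at cs
      simp only [mul_one] at cs
      unfold Pop
      rw [div_mul_div_comm]
      rw [mul_div_assoc']
      rw [div_le_iff₀ (by positivity)]
      calc (G.degree v:ℝ) * ((∑ u ∈ G.neighborFinset v, f u) * (∑ u ∈ G.neighborFinset v, f u))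
          = (∑ u ∈ G.neighborFinset v, f u)^2 * (G.degree v:ℝ) := by ring
        _ ≤ (∑ u ∈ G.neighborFinset v, (f u)^2) * (G.degree v:ℝ) * (G.degree v:ℝ) := by
            nlinarith [cs, hpos]
        _ = (∑ u ∈ G.neighborFinset v, (f u)^2) * ((G.degree v:ℝ) * (G.degree v:ℝ)) := by ring
  unfold ip
  calc ∑ v, (G.degree v : ℝ) * (Pop G f v * Pop G f v)
      ≤ ∑ v, ∑ u ∈ G.neighborFinset v, (f u)^2 :=
        Finset.sum_le_sum fun v _ => key v
    _ = ∑ u, (G.degree u : ℝ) * ((f u)^2) := sum_neighbor_swap G _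
    _ = ∑ u, (G.degree u : ℝ) * (f u * f u) := by
        apply Finset.sum_congr rfl; intro u _; ring

lemma ip_f_Pop (f : V → ℝ) : ip G f (Pop G f) = ip G f f - Dsum G f / 2 := by
  have key : ∀ v, (G.degree v : ℝ) * (f v * Pop G f v) = f v * ∑ u ∈ G.neighborFinset v, f u := by
    intro v
    by_cases hd : (G.degree v : ℝ) = 0
    · have : G.neighborFinset v = ∅ := by
        rw [← SimpleGraph.card_neighborFinset_eq_degree] at hd
        exact Finset.card_eq_zero.mp (by exact_mod_cast hd)
      rw [hd, this]; simp
    · unfold Pop; field_simp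
  have e1 : ∀ v, ∑ u ∈ G.neighborFinset v, (f v - f u)^2
      = (G.degree v : ℝ) * (f v * f v) - 2 * (f v * ∑ u ∈ G.neighborFinset v, f u)
        + ∑ u ∈ G.neighborFinset v, (f u)^2 := by
    intro v
    have h : ∀ u ∈ G.neighborFinset v, (f v - f u)^2 = f v * f v - 2*(f v * f u) + (f u)^2 := by
      intro u _; ring
    rw [Finset.sum_congr rfl h, Finset.sum_add_distrib, Finset.sum_sub_distrib]
    rw [Finset.sum_const, SimpleGraph.card_neighborFinset_eq_degree, nsmul_eq_mul]
    rw [← Finset.mul_sum, ← Finset.mul_sum]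
  have e2 : Dsum G f = (∑ v, (G.degree v:ℝ) * (f v * f v))
      - 2 * (∑ v, f v * ∑ u ∈ G.neighborFinset v, f u)
      + ∑ v, ∑ u ∈ G.neighborFinset v, (f u)^2 := by
    unfold Dsum
    rw [Finset.sum_congr rfl (fun v _ => e1 v), Finset.sum_add_distrib,
      Finset.sum_sub_distrib, ← Finset.mul_sum]
  have e3 : ∑ v, ∑ u ∈ G.neighborFinset v, (f u)^2 = ∑ u, (G.degree u:ℝ) * (f u * f u) := by
    rw [sum_neighbor_swap G (fun u => (f u)^2)]
    apply Finset.sum_congr rfl; intro u _; ring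
  have e4 : ip G f (Pop G f) = ∑ v, f v * ∑ u ∈ G.neighborFinset v, f u := by
    unfold ip
    exact Finset.sum_congr rfl (fun v _ => key v)
  have e5 : ip G f f = ∑ v, (G.degree v:ℝ) * (f v * f v) := rfl
  rw [e4, e5]
  rw [e3] at e2
  linarith

lemma ip_drop (f : V → ℝ) :
    ip G (Qop G f) (Qop G f) ≤ ip G f f - Dsum G f / 4 := by
  have expand : 4 * ip G (Qop G f) (Qop G f)
      = ip G f f + 2 * ip G f (Pop G f) + ip G (Pop G f) (Pop G f) := by
    unfold ip
    calc 4 * ∑ v, (G.degree v:ℝ) * (Qop G f v * Qop G f v)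
        = ∑ v, ((G.degree v:ℝ) * (f v * f v) + 2*((G.degree v:ℝ) * (f v * Pop G f v))
            + (G.degree v:ℝ) * (Pop G f v * Pop G f v)) := by
          rw [Finset.mul_sum]
          apply Finset.sum_congr rfl
          intro v _
          rw [Qop_eq]
          ring
      _ = (∑ v, (G.degree v:ℝ) * (f v * f v)) + (∑ v, 2*((G.degree v:ℝ) * (f v * Pop G f v)))
            + ∑ v, (G.degree v:ℝ) * (Pop G f v * Pop G f v) := by
          rw [Finset.sum_add_distrib, Finset.sum_add_distrib]
      _ = (∑ v, (G.degree v:ℝ) * (f v * f v)) + 2*(∑ v, (G.degree v:ℝ) * (f v * Pop G f v))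
            + ∑ v, (G.degree v:ℝ) * (Pop G f v * Pop G f v) := by
          rw [← Finset.mul_sum]
  have h1 := ip_Pop_Pop_le G f
  have h2 := ip_f_Pop G f
  linarith

end PartII

section PartIII
variable {V : Type} [Fintype V] [DecidableEq V] (G : SimpleGraph V) [DecidableRel G.Adj]

lemma hfun_nonneg (hdeg : ∀ v : V, 1 ≤ G.degree v) (w : V) (k : ℕ) (v : V) :
    0 ≤ hfun G w k v := by
  unfold hfun
  apply div_nonneg (pow_apply_nonneg G k v w)
  positivity

lemma ip_hfun (hdeg : ∀ v : V, 1 ≤ G.degree v) (x y : V) (k l : ℕ) :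
    ip G (hfun G x k) (hfun G y l) = ((lazyMatrix G) ^ (k + l)) x y / (G.degree y : ℝ) := by
  unfold ip hfun
  have hdx : ((G.degree x : ℝ)) ≠ 0 := by
    have : (0:ℝ) < (G.degree x : ℝ) := by exact_mod_cast hdeg x
    exact ne_of_gt this
  have hdy : ((G.degree y : ℝ)) ≠ 0 := by
    have : (0:ℝ) < (G.degree y : ℝ) := by exact_mod_cast hdeg y
    exact ne_of_gt this
  have key : ∀ v, (G.degree v : ℝ) * (((lazyMatrix G) ^ k) v x / (G.degree x : ℝ)
      * (((lazyMatrix G) ^ l) v y / (G.degree y : ℝ)))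
      = ((lazyMatrix G) ^ k) x v * ((lazyMatrix G) ^ l) v y / (G.degree y : ℝ) := by
    intro v
    have h := pow_rev G k v x
    have e : (G.degree v:ℝ) * (((lazyMatrix G) ^ k) v x / (G.degree x : ℝ)
        * (((lazyMatrix G) ^ l) v y / (G.degree y : ℝ)))
        = ((G.degree v:ℝ) * ((lazyMatrix G) ^ k) v x) * ((lazyMatrix G) ^ l) v y
          / ((G.degree x : ℝ) * (G.degree y : ℝ)) := by ring
    rw [e, h]
    field_simp
  rw [Finset.sum_congr rfl (fun v _ => key v)]
  rw [← Finset.sum_div]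
  rw [pow_add, Matrix.mul_apply]

lemma hfun_mass (hdeg : ∀ v : V, 1 ≤ G.degree v) (w : V) (k : ℕ) :
    ∑ v, (G.degree v : ℝ) * hfun G w k v = 1 := by
  unfold hfun
  have hdw : ((G.degree w : ℝ)) ≠ 0 := by
    have : (0:ℝ) < (G.degree w : ℝ) := by exact_mod_cast hdeg w
    exact ne_of_gt this
  have key : ∀ v, (G.degree v : ℝ) * (((lazyMatrix G) ^ k) v w / (G.degree w : ℝ))
      = ((lazyMatrix G) ^ k) w v := by
    intro v
    have h := pow_rev G k v w
    have e : (G.degree v:ℝ) * (((lazyMatrix G) ^ k) v w / (G.degree w : ℝ))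
        = ((G.degree v:ℝ) * ((lazyMatrix G) ^ k) v w) / (G.degree w : ℝ) := by ring
    rw [e, h]
    field_simp
  rw [Finset.sum_congr rfl (fun v _ => key v)]
  exact pow_rowsum G hdeg k w

/-- b_k for base vertex w -/
noncomputable def bseq (w : V) (k : ℕ) : ℝ := ip G (hfun G w k) (hfun G w k)

lemma bseq_eq (hdeg : ∀ v : V, 1 ≤ G.degree v) (w : V) (k : ℕ) :
    bseq G w k = ((lazyMatrix G) ^ (k + k)) w w / (G.degree w : ℝ) :=
  ip_hfun G hdeg w w k k

lemma bseq_pos (hdeg : ∀ v : V, 1 ≤ G.degree v) (w : V) (k : ℕ) : 0 < bseq G w k := by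
  rw [bseq_eq G hdeg]
  have : (0:ℝ) < (G.degree w : ℝ) := by exact_mod_cast hdeg w
  exact div_pos (pow_diag_pos G (k+k) w) this

lemma bseq_succ_le (w : V) (k : ℕ) :
    bseq G w (k+1) ≤ bseq G w k - Dsum G (hfun G w k) / 4 := by
  unfold bseq
  rw [hfun_succ]
  exact ip_drop G _

lemma bseq_mono (w : V) (k : ℕ) : bseq G w (k+1) ≤ bseq G w k := by
  have := bseq_succ_le G w k
  have := Dsum_nonneg G (hfun G w k)
  linarith

lemma bseq_le_max (hdeg : ∀ v : V, 1 ≤ G.degree v) (w : V) (k : ℕ) (M : ℝ)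
    (hM : ∀ v, hfun G w k v ≤ M) : bseq G w k ≤ M := by
  unfold bseq ip
  calc ∑ v, (G.degree v:ℝ) * (hfun G w k v * hfun G w k v)
      ≤ ∑ v, (G.degree v:ℝ) * (hfun G w k v * M) := by
        apply Finset.sum_le_sum
        intro v _
        have h1 := hfun_nonneg G hdeg w k v
        have h2 := hM v
        have h3 : (0:ℝ) ≤ (G.degree v : ℝ) := by positivity
        exact mul_le_mul_of_nonneg_left (mul_le_mul_of_nonneg_left h2 h1) h3
    _ = M * ∑ v, (G.degree v:ℝ) * hfun G w k v := by
        rw [Finset.mul_sum]; apply Finset.sum_congr rfl; intro v _; ring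
    _ = M := by rw [hfun_mass G hdeg]; ring

lemma bseq_zero_le_one (hdeg : ∀ v : V, 1 ≤ G.degree v) (w : V) : bseq G w 0 ≤ 1 := by
  rw [bseq_eq G hdeg]
  have h1 : (1:ℝ) ≤ (G.degree w : ℝ) := by exact_mod_cast hdeg w
  have : ((lazyMatrix G) ^ (0+0)) w w = 1 := by simp [Matrix.one_apply]
  rw [this]
  rw [div_le_one (by linarith)]
  exact h1

end PartIII

section PartIV
variable {V : Type} [Fintype V] [DecidableEq V] (G : SimpleGraph V) [DecidableRel G.Adj]

lemma walk_energy (f : V → ℝ) (α : ℝ) {u z : V} (w : G.Walk u z) :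
    w.IsPath → f z ≤ α → α < f u →
    ∃ E' : Finset (V × V),
      (∀ p ∈ E', G.Adj p.1 p.2) ∧
      (∀ p ∈ E', (p.2, p.1) ∉ E') ∧
      (∀ p ∈ E', p.1 ∈ w.support ∧ p.2 ∈ w.support) ∧
      (E'.card ≤ (w.support.toFinset.filter (fun v => α < f v)).card) ∧
      (f u - α ≤ ∑ p ∈ E', |f p.1 - f p.2|) := by
  induction w with
  | nil =>
    intro _ h1 h2
    exact absurd (lt_of_lt_of_le h2 h1) (lt_irrefl _)
  | @cons u u' z hadj w' ih =>
    intro hp hz hu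
    have hp' : w'.IsPath := hp.of_cons
    have hunotin : u ∉ w'.support := (SimpleGraph.Walk.cons_isPath_iff hadj w').mp hp |>.2
    have hsupp : (SimpleGraph.Walk.cons hadj w').support = u :: w'.support :=
      SimpleGraph.Walk.support_cons hadj w'
    by_cases hc : f u' ≤ α
    · refine ⟨{(u, u')}, ?_, ?_, ?_, ?_, ?_⟩
      · intro p hp2
        rw [Finset.mem_singleton] at hp2
        subst hp2; exact hadj
      · intro p hp2
        rw [Finset.mem_singleton] at hp2
        subst hp2
        rw [Finset.mem_singleton]
        intro hh
        have : u' = u := (Prod.mk.injEq _ _ _ _ |>.mp hh).1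
        exact hadj.ne this.symm
      · intro p hp2
        rw [Finset.mem_singleton] at hp2
        subst hp2
        constructor
        · rw [hsupp]; exact List.mem_cons_self
        · rw [hsupp]; exact List.mem_cons_of_mem _ w'.start_mem_support
      · have hmem : u ∈ (SimpleGraph.Walk.cons hadj w').support.toFinset.filter
            (fun v => α < f v) := by
          rw [Finset.mem_filter, List.mem_toFinset, hsupp]
          exact ⟨List.mem_cons_self, hu⟩
        rw [Finset.card_singleton]
        exact Finset.card_pos.mpr ⟨u, hmem⟩
      · rw [Finset.sum_singleton]
        calc f u - α ≤ f u - f u' := by linarith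
          _ ≤ |f u - f u'| := le_abs_self _
    · push_neg at hc
      obtain ⟨E'', hadj'', hanti'', hsupp'', hcard'', hsum''⟩ := ih hp' hz hc
      have hnotmem : (u, u') ∉ E'' := by
        intro hh
        exact hunotin ((hsupp'' _ hh).1)
      refine ⟨insert (u, u') E'', ?_, ?_, ?_, ?_, ?_⟩
      · intro p hp2
        rcases Finset.mem_insert.mp hp2 with h | h
        · subst h; exact hadj
        · exact hadj'' p h
      · intro p hp2
        rcases Finset.mem_insert.mp hp2 with h | h
        · subst h
          simp only [Finset.mem_insert]
          push_neg
          constructor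
          · intro hh
            have : u' = u := (Prod.mk.injEq _ _ _ _ |>.mp hh).1
            exact absurd this.symm hadj.ne
          · intro hh
            exact hunotin ((hsupp'' _ hh).2)
        · simp only [Finset.mem_insert]
          push_neg
          constructor
          · intro hh
            have h1 : p.2 = u := (Prod.mk.injEq _ _ _ _ |>.mp hh).1
            exact hunotin (h1 ▸ (hsupp'' p h).2)
          · exact hanti'' p h
      · intro p hp2
        rcases Finset.mem_insert.mp hp2 with h | h
        · subst h
          constructor
          · rw [hsupp]; exact List.mem_cons_self
          · rw [hsupp]; exact List.mem_cons_of_mem _ w'.start_mem_support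
        · obtain ⟨h1, h2⟩ := hsupp'' p h
          rw [hsupp]
          exact ⟨List.mem_cons_of_mem _ h1, List.mem_cons_of_mem _ h2⟩
      · rw [Finset.card_insert_of_notMem hnotmem]
        have hset : (SimpleGraph.Walk.cons hadj w').support.toFinset.filter
            (fun v => α < f v)
            = insert u (w'.support.toFinset.filter (fun v => α < f v)) := by
          rw [hsupp, List.toFinset_cons, Finset.filter_insert, if_pos hu]
        rw [hset, Finset.card_insert_of_notMem (by
          rw [Finset.mem_filter, List.mem_toFinset]
          intro hh
          exact hunotin hh.1)]
        omega
      · rw [Finset.sum_insert hnotmem]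
        have : f u - f u' ≤ |f u - f u'| := le_abs_self _
        linarith

lemma Dsum_eq_pairs (f : V → ℝ) :
    Dsum G f = ∑ p ∈ (univ ×ˢ univ).filter (fun p : V × V => G.Adj p.1 p.2),
      (f p.1 - f p.2)^2 := by
  rw [Finset.sum_filter, Finset.sum_product]
  unfold Dsum
  apply Finset.sum_congr rfl
  intro v _
  rw [← adj_sum_eq]

lemma energy_le_Dsum (f : V → ℝ) (E' : Finset (V × V))
    (hadj : ∀ p ∈ E', G.Adj p.1 p.2) (hanti : ∀ p ∈ E', (p.2, p.1) ∉ E') :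
    2 * ∑ p ∈ E', (f p.1 - f p.2)^2 ≤ Dsum G f := by
  rw [Dsum_eq_pairs]
  set S := (univ ×ˢ univ).filter (fun p : V × V => G.Adj p.1 p.2) with hS
  have hE'S : E' ⊆ S := by
    intro p hp
    rw [hS, Finset.mem_filter]
    exact ⟨Finset.mem_product.mpr ⟨mem_univ _, mem_univ _⟩, hadj p hp⟩
  set E'' := E'.image Prod.swap with hE''
  have hE''S : E'' ⊆ S := by
    intro p hp
    rw [hE''] at hp
    obtain ⟨q, hq, rfl⟩ := Finset.mem_image.mp hp
    rw [hS, Finset.mem_filter]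
    exact ⟨Finset.mem_product.mpr ⟨mem_univ _, mem_univ _⟩, (hadj q hq).symm⟩
  have hdisj : Disjoint E' E'' := by
    rw [Finset.disjoint_left]
    intro p hp hp''
    obtain ⟨q, hq, hqe⟩ := Finset.mem_image.mp hp''
    have : q = (p.2, p.1) := by
      rw [← hqe]; rfl
    exact hanti p hp (this ▸ hq)
  have hsum'' : ∑ p ∈ E'', (f p.1 - f p.2)^2 = ∑ p ∈ E', (f p.1 - f p.2)^2 := by
    rw [hE'', Finset.sum_image (fun x _ y _ h => Prod.swap_injective h)]
    apply Finset.sum_congr rfl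
    intro p _
    simp only [Prod.fst_swap, Prod.snd_swap]
    ring
  calc 2 * ∑ p ∈ E', (f p.1 - f p.2)^2
      = ∑ p ∈ E' ∪ E'', (f p.1 - f p.2)^2 := by
        rw [Finset.sum_union hdisj, hsum'']; ring
    _ ≤ ∑ p ∈ S, (f p.1 - f p.2)^2 := by
        apply Finset.sum_le_sum_of_subset_of_nonneg
        · exact Finset.union_subset hE'S hE''S
        · intro p _ _; exact sq_nonneg _

lemma sum_degrees_real :
    ∑ v, (G.degree v : ℝ) = 2 * (G.edgeFinset.card : ℝ) := by
  have := SimpleGraph.sum_degrees_eq_twice_card_edges G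
  exact_mod_cast congrArg (Nat.cast : ℕ → ℝ) this

lemma nash_dichotomy (hconn : G.Connected) (hdeg : ∀ v : V, 1 ≤ G.degree v)
    (f : V → ℝ) (hf : ∀ v, 0 ≤ f v)
    (hmass : ∑ v, (G.degree v : ℝ) * f v = 1) :
    ip G f f ≤ 1 / (G.edgeFinset.card : ℝ) ∨ (ip G f f)^3 / 4 ≤ Dsum G f := by
  have hV : Nonempty V := by
    by_contra h
    rw [not_nonempty_iff] at h
    have hz : ∑ v : V, (G.degree v : ℝ) * f v = 0 :=
      Finset.sum_eq_zero (fun v _ => (h.false v).elim)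
    rw [hz] at hmass
    norm_num at hmass
  have hne : (univ : Finset V).Nonempty := Finset.univ_nonempty
  obtain ⟨x₀, _, hmax⟩ := Finset.exists_max_image univ f hne
  set M := f x₀ with hM
  have hMpos : 0 < M := by
    by_contra h
    push_neg at h
    have : ∑ v, (G.degree v : ℝ) * f v ≤ 0 := by
      apply Finset.sum_nonpos
      intro v _
      have h1 : f v ≤ 0 := le_trans (hmax v (mem_univ v)) h
      have h2 : (0:ℝ) ≤ (G.degree v : ℝ) := by positivity
      exact mul_nonpos_of_nonneg_of_nonpos h2 h1
    linarith
  have hip_le_M : ip G f f ≤ M := by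
    unfold ip
    calc ∑ v, (G.degree v:ℝ) * (f v * f v)
        ≤ ∑ v, (G.degree v:ℝ) * (f v * M) := by
          apply Finset.sum_le_sum
          intro v _
          have h3 : (0:ℝ) ≤ (G.degree v : ℝ) := by positivity
          exact mul_le_mul_of_nonneg_left
            (mul_le_mul_of_nonneg_left (hmax v (mem_univ v)) (hf v)) h3
      _ = M * ∑ v, (G.degree v:ℝ) * f v := by
          rw [Finset.mul_sum]; apply Finset.sum_congr rfl; intro v _; ring
      _ = M := by rw [hmass, mul_one]
  have hip_nonneg : 0 ≤ ip G f f := by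
    apply Finset.sum_nonneg
    intro v _
    have := hf v
    positivity
  have hm2 : ∑ v, (G.degree v:ℝ) = 2 * (G.edgeFinset.card : ℝ) := sum_degrees_real G
  have hmpos : (0:ℝ) < (G.edgeFinset.card : ℝ) := by
    have h1 : (1:ℝ) ≤ (G.degree (Classical.arbitrary V) : ℝ) := by
      exact_mod_cast hdeg _
    have h2 : (1:ℝ) ≤ ∑ v, (G.degree v:ℝ) := by
      calc (1:ℝ) ≤ (G.degree (Classical.arbitrary V) : ℝ) := h1
        _ ≤ ∑ v, (G.degree v:ℝ) :=
          Finset.single_le_sum (f := fun v : V => (G.degree v : ℝ))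
            (fun v _ => by positivity) (mem_univ _)
    linarith
  by_cases hcase : ∃ z, f z ≤ M / 2
  · right
    obtain ⟨z, hz⟩ := hcase
    obtain ⟨wlk⟩ := hconn.preconnected x₀ z
    have hMz : M / 2 < f x₀ := by linarith
    obtain ⟨E', hadj, hanti, _, hcard, hsum⟩ :=
      walk_energy G f (M/2) (wlk.toPath : G.Path x₀ z).1 (wlk.toPath : G.Path x₀ z).2 hz hMz
    set A := univ.filter (fun v => M/2 < f v) with hA
    have hcardA : (A.card : ℝ) * (M/2) ≤ 1 := by
      have h1 : ∀ v ∈ A, M/2 ≤ (G.degree v : ℝ) * f v := by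
        intro v hv
        rw [hA, Finset.mem_filter] at hv
        have hd1 : (1:ℝ) ≤ (G.degree v : ℝ) := by exact_mod_cast hdeg v
        nlinarith [hv.2, hf v]
      calc (A.card : ℝ) * (M/2) = ∑ _v ∈ A, (M/2) := by
            rw [Finset.sum_const, nsmul_eq_mul]
        _ ≤ ∑ v ∈ A, (G.degree v : ℝ) * f v := Finset.sum_le_sum h1
        _ ≤ ∑ v, (G.degree v : ℝ) * f v := by
            apply Finset.sum_le_sum_of_subset_of_nonneg (Finset.filter_subset _ _)
            intro v _ _
            have := hf v
            positivity
        _ = 1 := hmass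
    have hcard2 : (E'.card : ℝ) ≤ (A.card : ℝ) := by
      have : E'.card ≤ A.card := le_trans hcard (Finset.card_le_card (by
        rw [hA]
        intro v hv
        rw [Finset.mem_filter] at hv ⊢
        exact ⟨mem_univ v, hv.2⟩))
      exact_mod_cast this
    have hCS : (M/2)^2 ≤ (E'.card : ℝ) * ∑ p ∈ E', (f p.1 - f p.2)^2 := by
      have h1 : (∑ p ∈ E', 1 * |f p.1 - f p.2|)^2
          ≤ (∑ p ∈ E', (1:ℝ)^2) * ∑ p ∈ E', |f p.1 - f p.2|^2 :=
        Finset.sum_mul_sq_le_sq_mul_sq _ _ _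
      simp only [one_mul, one_pow, Finset.sum_const, nsmul_eq_mul, mul_one] at h1
      have h2 : ∀ p ∈ E', |f p.1 - f p.2|^2 = (f p.1 - f p.2)^2 := by
        intro p _; exact sq_abs _
      rw [Finset.sum_congr rfl h2] at h1
      have h3 : (M/2)^2 ≤ (∑ p ∈ E', |f p.1 - f p.2|)^2 := by
        have h4 : 0 ≤ ∑ p ∈ E', |f p.1 - f p.2| :=
          Finset.sum_nonneg fun p _ => abs_nonneg _
        nlinarith [hsum]
      linarith
    have hE : 2 * ∑ p ∈ E', (f p.1 - f p.2)^2 ≤ Dsum G f := energy_le_Dsum G f E' hadj hanti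
    -- combine: (M/2)^2 ≤ cardA * (Dsum/2), cardA ≤ 2/M
    have hcardA' : (A.card : ℝ) ≤ 2 / M := by
      rw [le_div_iff₀ hMpos]
      nlinarith [hcardA]
    have hsum_nonneg : 0 ≤ ∑ p ∈ E', (f p.1 - f p.2)^2 :=
      Finset.sum_nonneg fun p _ => sq_nonneg _
    have key : M^3 / 4 ≤ Dsum G f := by
      have h5 : (M/2)^2 ≤ (2/M) * (Dsum G f / 2) := by
        calc (M/2)^2 ≤ (E'.card : ℝ) * ∑ p ∈ E', (f p.1 - f p.2)^2 := hCS
          _ ≤ (A.card : ℝ) * ∑ p ∈ E', (f p.1 - f p.2)^2 :=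
              mul_le_mul_of_nonneg_right hcard2 hsum_nonneg
          _ ≤ (2/M) * ∑ p ∈ E', (f p.1 - f p.2)^2 :=
              mul_le_mul_of_nonneg_right hcardA' hsum_nonneg
          _ ≤ (2/M) * (Dsum G f / 2) := by
              exact mul_le_mul_of_nonneg_left (by linarith)
                (div_nonneg (by norm_num) (le_of_lt hMpos))
      have h6 : M * (M/2)^2 ≤ M * ((2/M) * (Dsum G f / 2)) :=
        mul_le_mul_of_nonneg_left h5 (le_of_lt hMpos)
      have h7 : M * ((2/M) * (Dsum G f / 2)) = Dsum G f := by
        field_simp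
      rw [h7] at h6
      nlinarith [h6]
    calc (ip G f f)^3 / 4 ≤ M^3 / 4 := by
          have : (ip G f f)^3 ≤ M^3 :=
            pow_le_pow_left₀ hip_nonneg hip_le_M 3
          linarith
      _ ≤ Dsum G f := key
  · left
    push_neg at hcase
    have hMm : M * (G.edgeFinset.card : ℝ) ≤ 1 := by
      have h1 : ∀ v, M/2 ≤ f v := fun v => le_of_lt (hcase v)
      have h2 : M/2 * (2 * (G.edgeFinset.card : ℝ)) ≤ ∑ v, (G.degree v : ℝ) * f v := by
        rw [← hm2, Finset.mul_sum]
        apply Finset.sum_le_sum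
        intro v _
        have h3 : (0:ℝ) ≤ (G.degree v : ℝ) := by positivity
        calc M/2 * (G.degree v:ℝ) = (G.degree v:ℝ) * (M/2) := by ring
          _ ≤ (G.degree v:ℝ) * f v := mul_le_mul_of_nonneg_left (h1 v) h3
      rw [hmass] at h2
      nlinarith [h2]
    calc ip G f f ≤ M := hip_le_M
      _ ≤ 1 / (G.edgeFinset.card : ℝ) := by
          rw [le_div_iff₀ hmpos]
          exact hMm

section PartV
variable {V : Type} [Fintype V] [DecidableEq V] (G : SimpleGraph V) [DecidableRel G.Adj]

lemma bseq_dichotomy (hconn : G.Connected) (hdeg : ∀ v : V, 1 ≤ G.degree v) (w : V) (k : ℕ) :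
    bseq G w k ≤ 1 / (G.edgeFinset.card : ℝ)
      ∨ bseq G w (k+1) ≤ bseq G w k - (bseq G w k)^3 / 16 := by
  rcases nash_dichotomy G hconn hdeg (hfun G w k) (hfun_nonneg G hdeg w k)
    (hfun_mass G hdeg w k) with h | h
  · exact Or.inl h
  · right
    have h2 := bseq_succ_le G w k
    have : (bseq G w k)^3 / 4 ≤ Dsum G (hfun G w k) := h
    unfold bseq at *
    linarith

/-- pure real recursion -/
lemma recursion_aux (c : ℝ) (b : ℕ → ℝ) (hpos : ∀ k, 0 < b k)
    (hmono : ∀ k, b (k+1) ≤ b k) (hb0 : b 0 ≤ 1)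
    (hdich : ∀ k, b k ≤ c ∨ b (k+1) ≤ b k - (b k)^3 / 16) :
    ∀ k, b k ≤ c ∨ (b k ≤ 1 ∧ 1 + (k:ℝ) / 8 ≤ 1 / (b k)^2) := by
  intro k
  induction k with
  | zero =>
    right
    refine ⟨hb0, ?_⟩
    have h1 := hpos 0
    have h2 : (b 0)^2 ≤ 1 := by nlinarith
    simp only [Nat.cast_zero]
    rw [le_div_iff₀ (by positivity)]
    nlinarith
  | succ k ih =>
    rcases ih with h | ⟨h1, h2⟩
    · left
      exact le_trans (hmono k) h
    · rcases hdich k with h | h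
      · left
        exact le_trans (hmono k) h
      · right
        have hbk := hpos k
        have hbk1 := hpos (k+1)
        have hc : b (k+1) ≤ b k - (b k)^3/16 := h
        have hcpos : 0 < b k - (b k)^3/16 := lt_of_lt_of_le hbk1 hc
        constructor
        · linarith [hmono k]
        · have hc2 : 0 < (b k - (b k)^3/16)^2 := pow_pos hcpos 2
          have hb2 : (b k)^2 ≤ 1 := by nlinarith
          have hb86 : (b k)^8 ≤ (b k)^6 :=
            pow_le_pow_of_le_one hbk.le h1 (by norm_num)
          have hb6 : (0:ℝ) ≤ (b k)^6 := by positivity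
          have hpoly : (8 + (b k)^2) * (b k - (b k)^3/16)^2 ≤ 8 * (b k)^2 := by
            have e : 8*(b k)^2 - (8+(b k)^2)*(b k - (b k)^3/16)^2
                = (3/32)*(b k)^6 - (b k)^8/256 := by ring
            nlinarith [hb86, hb6]
          have key : 1 / (b k)^2 + 1/8 ≤ 1 / (b k - (b k)^3/16)^2 := by
            have heq : 1/(b k)^2 + 1/8 = (8 + (b k)^2)/(8*(b k)^2) := by
              rw [div_add_div 1 1 (ne_of_gt (pow_pos hbk 2)) (by norm_num : (8:ℝ) ≠ 0)]
              rw [show (1*8 + (b k)^2*1 : ℝ) = 8 + (b k)^2 by ring,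
                show ((b k)^2*8 : ℝ) = 8*(b k)^2 by ring]
            rw [heq, div_le_div_iff₀ (by positivity) hc2]
            calc (8 + (b k)^2) * (b k - (b k)^3/16)^2 ≤ 8 * (b k)^2 := hpoly
              _ = 1 * (8 * (b k)^2) := by ring
          have key2 : 1 / (b k - (b k)^3/16)^2 ≤ 1 / (b (k+1))^2 := by
            apply one_div_le_one_div_of_le (by positivity)
            nlinarith [hc, hcpos, hbk1]
          have harith : (1:ℝ) + (↑(k+1):ℝ)/8 ≤ 1 + (k:ℝ)/8 + 1/8 := by
            push_cast
            linarith
          calc (1:ℝ) + (↑(k+1):ℝ)/8 ≤ 1 + (k:ℝ)/8 + 1/8 := harith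
            _ ≤ 1/(b k)^2 + 1/8 := by linarith
            _ ≤ 1/(b k - (b k)^3/16)^2 := key
            _ ≤ 1/(b (k+1))^2 := key2

lemma bseq_sqrt_bound (hconn : G.Connected) (hdeg : ∀ v : V, 1 ≤ G.degree v) (w : V)
    (k : ℕ) (hk : 1 ≤ k) (hk2 : (k:ℝ) ≤ 8 * (G.edgeFinset.card : ℝ)^2) :
    bseq G w k ≤ Real.sqrt 8 / Real.sqrt k := by
  have hmR : (0:ℝ) < (G.edgeFinset.card : ℝ) := by
    by_contra hh
    push_neg at hh
    have h0 : (G.edgeFinset.card : ℝ) = 0 := le_antisymm hh (by positivity)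
    rw [h0] at hk2
    norm_num at hk2
    have : (1:ℝ) ≤ (k:ℝ) := by exact_mod_cast hk
    linarith
  have hkR : (0:ℝ) < (k:ℝ) := by exact_mod_cast hk
  have hsk : 0 < Real.sqrt k := Real.sqrt_pos.mpr hkR
  rcases recursion_aux (1 / (G.edgeFinset.card : ℝ)) (bseq G w)
    (bseq_pos G hdeg w) (bseq_mono G w) (bseq_zero_le_one G hdeg w)
    (bseq_dichotomy G hconn hdeg w) k with h | ⟨_, h2⟩
  · -- b ≤ 1/m ≤ √8/√k since √k ≤ √8 * m
    have hsqk : Real.sqrt k ≤ Real.sqrt 8 * (G.edgeFinset.card : ℝ) := by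
      have : Real.sqrt k ≤ Real.sqrt (8 * (G.edgeFinset.card : ℝ)^2) :=
        Real.sqrt_le_sqrt hk2
      rwa [Real.sqrt_mul (by norm_num), Real.sqrt_sq (le_of_lt hmR)] at this
    calc bseq G w k ≤ 1 / (G.edgeFinset.card : ℝ) := h
      _ ≤ Real.sqrt 8 / Real.sqrt k := by
        rw [div_le_div_iff₀ hmR hsk]
        calc 1 * Real.sqrt k = Real.sqrt k := one_mul _
          _ ≤ Real.sqrt 8 * (G.edgeFinset.card : ℝ) := hsqk
  · -- 1/b² ≥ k/8 ⇒ b ≤ √(8/k)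
    have hb := bseq_pos G hdeg w k
    have h3 : (k:ℝ)/8 ≤ 1/(bseq G w k)^2 := by linarith
    have h4 : (bseq G w k)^2 ≤ 8/(k:ℝ) := by
      rw [div_le_div_iff₀ (by norm_num) (by positivity)] at h3
      rw [le_div_iff₀ hkR]
      nlinarith [h3]
    calc bseq G w k = Real.sqrt ((bseq G w k)^2) := (Real.sqrt_sq (le_of_lt hb)).symm
      _ ≤ Real.sqrt (8/(k:ℝ)) := Real.sqrt_le_sqrt h4
      _ = Real.sqrt 8 / Real.sqrt k := by
          rw [Real.sqrt_div (by norm_num : (0:ℝ) ≤ 8)]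

end PartV

section PartVI
variable {V : Type} [Fintype V] [DecidableEq V] (G : SimpleGraph V) [DecidableRel G.Adj]

lemma ip_sq_le (f g : V → ℝ) : (ip G f g)^2 ≤ ip G f f * ip G g g := by
  unfold ip
  have h := Finset.sum_mul_sq_le_sq_mul_sq univ
    (fun v => Real.sqrt (G.degree v) * f v) (fun v => Real.sqrt (G.degree v) * g v)
  have e1 : ∀ v : V, (Real.sqrt (G.degree v) * f v) * (Real.sqrt (G.degree v) * g v)
      = (G.degree v:ℝ) * (f v * g v) := by
    intro v
    have h5 : Real.sqrt (G.degree v) * Real.sqrt (G.degree v) = (G.degree v:ℝ) :=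
      Real.mul_self_sqrt (by positivity)
    calc (Real.sqrt (G.degree v) * f v) * (Real.sqrt (G.degree v) * g v)
        = (Real.sqrt (G.degree v) * Real.sqrt (G.degree v)) * (f v * g v) := by ring
      _ = (G.degree v:ℝ) * (f v * g v) := by rw [h5]
  have e2 : ∀ v : V, (Real.sqrt (G.degree v) * f v)^2 = (G.degree v:ℝ) * (f v * f v) := by
    intro v
    have : Real.sqrt (G.degree v) * Real.sqrt (G.degree v) = (G.degree v:ℝ) :=
      Real.mul_self_sqrt (by positivity)
    nlinarith [this]
  have e3 : ∀ v : V, (Real.sqrt (G.degree v) * g v)^2 = (G.degree v:ℝ) * (g v * g v) := by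
    intro v
    have : Real.sqrt (G.degree v) * Real.sqrt (G.degree v) = (G.degree v:ℝ) :=
      Real.mul_self_sqrt (by positivity)
    nlinarith [this]
  rw [Finset.sum_congr rfl (fun v _ => e1 v), Finset.sum_congr rfl (fun v _ => e2 v),
    Finset.sum_congr rfl (fun v _ => e3 v)] at h
  exact h

lemma ip_nonneg_of_nonneg (f g : V → ℝ) (hf : ∀ v, 0 ≤ f v) (hg : ∀ v, 0 ≤ g v) :
    0 ≤ ip G f g := by
  apply Finset.sum_nonneg
  intro v _
  have := hf v; have := hg v
  positivity

lemma ip_le_sqrt (f g : V → ℝ) (hf : ∀ v, 0 ≤ f v) (hg : ∀ v, 0 ≤ g v) :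
    ip G f g ≤ Real.sqrt (ip G f f) * Real.sqrt (ip G g g) := by
  have h0 := ip_nonneg_of_nonneg G f g hf hg
  have h1 := ip_sq_le G f g
  have h2 : ip G f g = Real.sqrt ((ip G f g)^2) := (Real.sqrt_sq h0).symm
  rw [h2]
  calc Real.sqrt ((ip G f g)^2) ≤ Real.sqrt (ip G f f * ip G g g) := Real.sqrt_le_sqrt h1
    _ = Real.sqrt (ip G f f) * Real.sqrt (ip G g g) := Real.sqrt_mul (by
        have hff : 0 ≤ ip G f f := by
          apply Finset.sum_nonneg; intro v _; have := hf v; positivity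
        exact hff) _

/-- off-diagonal bound through bseq at index i/2 -/
lemma pow_off_diag (hdeg : ∀ v : V, 1 ≤ G.degree v) (x y : V) (i : ℕ) :
    ((lazyMatrix G) ^ i) x y
      ≤ (G.degree y : ℝ) * ((bseq G x (i/2) + bseq G y (i/2)) / 2) := by
  set k := i / 2 with hk
  have hir : i = k + (k + i % 2) := by omega
  have hQ : ((lazyMatrix G) ^ i) x y
      = (G.degree y : ℝ) * ip G (hfun G x k) (hfun G y (k + i % 2)) := by
    rw [ip_hfun G hdeg x y k (k + i % 2), ← hir]
    have hdy : ((G.degree y : ℝ)) ≠ 0 := by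
      have : (0:ℝ) < (G.degree y : ℝ) := by exact_mod_cast hdeg y
      exact ne_of_gt this
    field_simp
  rw [hQ]
  apply mul_le_mul_of_nonneg_left _ (by positivity)
  have hb1 : ip G (hfun G x k) (hfun G y (k + i % 2))
      ≤ Real.sqrt (bseq G x k) * Real.sqrt (bseq G y (k + i % 2)) :=
    ip_le_sqrt G _ _ (hfun_nonneg G hdeg x k) (hfun_nonneg G hdeg y (k + i % 2))
  have hb2 : bseq G y (k + i % 2) ≤ bseq G y k := by
    have hmod : i % 2 = 0 ∨ i % 2 = 1 := by omega
    rcases hmod with h | h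
    · rw [h, add_zero]
    · rw [h]
      exact bseq_mono G y k
  have hb3 : Real.sqrt (bseq G y (k + i % 2)) ≤ Real.sqrt (bseq G y k) :=
    Real.sqrt_le_sqrt hb2
  have hbx0 : 0 ≤ Real.sqrt (bseq G x k) := Real.sqrt_nonneg _
  have hchain : ip G (hfun G x k) (hfun G y (k + i % 2))
      ≤ Real.sqrt (bseq G x k) * Real.sqrt (bseq G y k) :=
    le_trans hb1 (mul_le_mul_of_nonneg_left hb3 hbx0)
  have hAM : Real.sqrt (bseq G x k) * Real.sqrt (bseq G y k)
      ≤ (bseq G x k + bseq G y k) / 2 := by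
    have h1 : 0 ≤ (Real.sqrt (bseq G x k) - Real.sqrt (bseq G y k))^2 := sq_nonneg _
    have h2 : Real.sqrt (bseq G x k)^2 = bseq G x k :=
      Real.sq_sqrt (le_of_lt (bseq_pos G hdeg x k))
    have h3 : Real.sqrt (bseq G y k)^2 = bseq G y k :=
      Real.sq_sqrt (le_of_lt (bseq_pos G hdeg y k))
    nlinarith [h1, h2, h3]
  linarith

/-- sqrt harmonic sum bound -/
lemma sqrt_harmonic_sum : ∀ K : ℕ, 1 ≤ K →
    ∑ i ∈ Finset.range K, 1 / Real.sqrt (i+1) ≤ 2 * Real.sqrt K - 1 := by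
  intro K
  induction K with
  | zero => intro h; omega
  | succ n ih =>
    intro _
    by_cases hn : 1 ≤ n
    · have h1 := ih hn
      rw [Finset.sum_range_succ]
      have hs : Real.sqrt ((n:ℝ)+1) > 0 := by positivity
      have hsq : Real.sqrt ((n:ℝ)+1)^2 = (n:ℝ)+1 := Real.sq_sqrt (by positivity)
      have hsqn : Real.sqrt (n:ℝ)^2 = (n:ℝ) := Real.sq_sqrt (by positivity)
      have hkey : 1 / Real.sqrt ((n:ℝ)+1) ≤ 2 * Real.sqrt ((n:ℝ)+1) - 2 * Real.sqrt (n:ℝ) := by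
        rw [div_le_iff₀ hs]
        have hmul : Real.sqrt (n:ℝ) * Real.sqrt ((n:ℝ)+1) ≤ (n:ℝ) + 1/2 := by
          have h4 : (Real.sqrt (n:ℝ) * Real.sqrt ((n:ℝ)+1))^2 = (n:ℝ) * ((n:ℝ)+1) := by
            rw [mul_pow, hsq, hsqn]
          nlinarith [h4, Real.sqrt_nonneg (n:ℝ), Real.sqrt_nonneg ((n:ℝ)+1),
            mul_nonneg (Real.sqrt_nonneg (n:ℝ)) (Real.sqrt_nonneg ((n:ℝ)+1))]
        nlinarith [hmul, hsq]
      have hcast : ((n+1:ℕ):ℝ) = (n:ℝ)+1 := by push_cast; ring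
      rw [hcast]
      linarith
    · have hn0 : n = 0 := by omega
      subst hn0
      norm_num
  
/-- doubling lemma -/
lemma sum_halved (c : ℕ → ℝ) (n : ℕ) :
    ∑ i ∈ Finset.range (2*n), c (i/2) = 2 * ∑ k ∈ Finset.range n, c k := by
  induction n with
  | zero => simp
  | succ n ih =>
    have h1 : 2*(n+1) = (2*n) + 1 + 1 := by ring
    rw [h1, Finset.sum_range_succ, Finset.sum_range_succ, ih, Finset.sum_range_succ]
    have h2 : (2*n)/2 = n := by omega
    have h3 : (2*n+1)/2 = n := by omega
    rw [h2, h3]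
    ring

end PartVI

section PartVII
variable {V : Type} [Fintype V] [DecidableEq V] (G : SimpleGraph V) [DecidableRel G.Adj]

lemma green_bound (hconn : G.Connected) (hdeg : ∀ v : V, 1 ≤ G.degree v) (x y : V) (t : ℕ)
    (ht : (t:ℝ) ≤ ((G.edgeFinset.card : ℝ))^2) :
    ∑ i ∈ Finset.range (t+1), ((lazyMatrix G)^i) x y
      ≤ 8 * (G.degree y : ℝ) * Real.sqrt (t+1) := by
  have hdy1 : (1:ℝ) ≤ (G.degree y : ℝ) := by exact_mod_cast hdeg y
  have hst1 : (1:ℝ) ≤ Real.sqrt (t+1) := by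
    have h := Real.sqrt_le_sqrt (show (1:ℝ) ≤ (t:ℝ)+1 by
      linarith [Nat.cast_nonneg (α := ℝ) t])
    rwa [Real.sqrt_one] at h
  by_cases htsmall : t ≤ 1
  · have h1 : ∑ i ∈ Finset.range (t+1), ((lazyMatrix G)^i) x y
        ≤ ∑ i ∈ Finset.range (t+1), (1:ℝ) :=
      Finset.sum_le_sum fun i _ => pow_apply_le_one G hdeg i x y
    rw [Finset.sum_const, Finset.card_range, nsmul_eq_mul, mul_one] at h1
    have h2 : ((t+1:ℕ):ℝ) ≤ 2 := by
      have : t + 1 ≤ 2 := by omega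
      exact_mod_cast this
    calc ∑ i ∈ Finset.range (t+1), ((lazyMatrix G)^i) x y ≤ ((t+1:ℕ):ℝ) := h1
      _ ≤ 2 := h2
      _ ≤ 8 * (G.degree y : ℝ) * Real.sqrt (t+1) := by nlinarith
  · push_neg at htsmall
    set K := t / 2 with hKdef
    have hK1 : 1 ≤ K := by omega
    have h2K : 2 * K ≤ t := by omega
    set c : ℕ → ℝ := fun k => (bseq G x k + bseq G y k) / 2 with hc
    have hcnonneg : ∀ k, 0 ≤ c k := by
      intro k
      have := bseq_pos G hdeg x k
      have := bseq_pos G hdeg y k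
      rw [hc]
      dsimp only
      linarith
    have step1 : ∑ i ∈ Finset.range (t+1), ((lazyMatrix G)^i) x y
        ≤ (G.degree y : ℝ) * ∑ i ∈ Finset.range (t+1), c (i/2) := by
      rw [Finset.mul_sum]
      exact Finset.sum_le_sum fun i _ => pow_off_diag G hdeg x y i
    have step2 : ∑ i ∈ Finset.range (t+1), c (i/2)
        ≤ ∑ i ∈ Finset.range (2*(K+1)), c (i/2) := by
      apply Finset.sum_le_sum_of_subset_of_nonneg
      · apply Finset.range_subset_range.mpr
        omega
      · intro i _ _
        exact hcnonneg _
    have step3 : ∑ i ∈ Finset.range (2*(K+1)), c (i/2)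
        = 2 * ∑ k ∈ Finset.range (K+1), c k := sum_halved c (K+1)
    have hc0 : c 0 ≤ 1 := by
      rw [hc]
      dsimp only
      have := bseq_zero_le_one G hdeg x
      have := bseq_zero_le_one G hdeg y
      linarith
    have hck : ∀ i ∈ Finset.range K, c (i+1) ≤ Real.sqrt 8 / Real.sqrt (i+1) := by
      intro i hi
      rw [Finset.mem_range] at hi
      have hle : ((i+1:ℕ):ℝ) ≤ 8 * ((G.edgeFinset.card : ℝ))^2 := by
        have h1 : ((i+1:ℕ):ℝ) ≤ (t:ℝ) := by
          have : i + 1 ≤ t := by omega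
          exact_mod_cast this
        have h2 : (0:ℝ) ≤ ((G.edgeFinset.card : ℝ))^2 := sq_nonneg _
        linarith
      have hx1 := bseq_sqrt_bound G hconn hdeg x (i+1) (by omega) hle
      have hy1 := bseq_sqrt_bound G hconn hdeg y (i+1) (by omega) hle
      rw [hc]
      dsimp only
      have hcast : ((i+1:ℕ):ℝ) = (i:ℝ)+1 := by push_cast; ring
      rw [hcast] at hx1 hy1
      linarith
    have step4 : ∑ k ∈ Finset.range (K+1), c k
        ≤ 1 + Real.sqrt 8 * (2 * Real.sqrt K - 1) := by
      rw [Finset.sum_range_succ']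
      have h1 : ∑ i ∈ Finset.range K, c (i+1)
          ≤ ∑ i ∈ Finset.range K, Real.sqrt 8 / Real.sqrt (i+1) :=
        Finset.sum_le_sum hck
      have h2 : ∑ i ∈ Finset.range K, Real.sqrt 8 / Real.sqrt (i+1)
          = Real.sqrt 8 * ∑ i ∈ Finset.range K, 1 / Real.sqrt (i+1) := by
        rw [Finset.mul_sum]
        apply Finset.sum_congr rfl
        intro i _
        ring
      have h3 := sqrt_harmonic_sum K hK1
      have h4 : (0:ℝ) ≤ Real.sqrt 8 := Real.sqrt_nonneg _
      have h5 : Real.sqrt 8 * ∑ i ∈ Finset.range K, 1 / Real.sqrt (i+1)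
          ≤ Real.sqrt 8 * (2 * Real.sqrt K - 1) :=
        mul_le_mul_of_nonneg_left h3 h4
      linarith [h1, h2 ▸ h5, hc0]
    -- numeric final
    have hsqrt8 : (2:ℝ) ≤ Real.sqrt 8 := by
      rw [show (2:ℝ) = Real.sqrt 4 by
        rw [show (4:ℝ) = 2^2 by norm_num, Real.sqrt_sq (by norm_num : (0:ℝ) ≤ 2)]]
      exact Real.sqrt_le_sqrt (by norm_num)
    have hKt : Real.sqrt 8 * Real.sqrt K ≤ 2 * Real.sqrt (t+1) := by
      rw [← Real.sqrt_mul (by norm_num : (0:ℝ) ≤ 8)]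
      rw [show (2:ℝ) * Real.sqrt (t+1) = Real.sqrt 4 * Real.sqrt ((t:ℝ)+1) by
        rw [show (4:ℝ) = 2^2 by norm_num, Real.sqrt_sq (by norm_num : (0:ℝ) ≤ 2)]]
      rw [← Real.sqrt_mul (by norm_num : (0:ℝ) ≤ 4)]
      apply Real.sqrt_le_sqrt
      have : ((2*K:ℕ):ℝ) ≤ (t:ℝ) := by exact_mod_cast h2K
      push_cast at this ⊢
      linarith
    have final : 2 * (1 + Real.sqrt 8 * (2 * Real.sqrt K - 1)) ≤ 8 * Real.sqrt (t+1) := by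
      have h6 : 2 * (1 + Real.sqrt 8 * (2 * Real.sqrt K - 1))
          = 2 + 4 * (Real.sqrt 8 * Real.sqrt K) - 2 * Real.sqrt 8 := by ring
      rw [h6]
      have h7 : 4 * (Real.sqrt 8 * Real.sqrt K) ≤ 8 * Real.sqrt (t+1) := by linarith
      linarith
    have hdy0 : (0:ℝ) ≤ (G.degree y : ℝ) := by linarith
    calc ∑ i ∈ Finset.range (t+1), ((lazyMatrix G)^i) x y
        ≤ (G.degree y : ℝ) * ∑ i ∈ Finset.range (t+1), c (i/2) := step1
      _ ≤ (G.degree y : ℝ) * (2 * ∑ k ∈ Finset.range (K+1), c k) := by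
          apply mul_le_mul_of_nonneg_left _ hdy0
          rw [← step3]
          exact step2
      _ ≤ (G.degree y : ℝ) * (2 * (1 + Real.sqrt 8 * (2 * Real.sqrt K - 1))) := by
          apply mul_le_mul_of_nonneg_left _ hdy0
          linarith [step4]
      _ ≤ (G.degree y : ℝ) * (8 * Real.sqrt (t+1)) :=
          mul_le_mul_of_nonneg_left final hdy0
      _ = 8 * (G.degree y : ℝ) * Real.sqrt (t+1) := by ring

end PartVII


section PartVIII
variable {V : Type} [Fintype V] [DecidableEq V] (G : SimpleGraph V) [DecidableRel G.Adj]


lemma visits_eq_sum (y : V) (t : ℕ) (f : Fin (t+1) → V) :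
    ((visits y f : ℕ) : ℝ) = ∑ i : Fin (t+1), (if f i = y then (1:ℝ) else 0) := by
  unfold visits
  rw [Finset.card_filter]
  push_cast
  apply Finset.sum_congr rfl
  intro i _
  split_ifs <;> norm_num

lemma sum_snoc_decomp {t : ℕ} (F : (Fin (t+2) → V) → ℝ) :
    ∑ f : Fin (t+2) → V, F f = ∑ g : Fin (t+1) → V, ∑ v : V, F (Fin.snoc g v) := by
  rw [← Equiv.sum_comp (Fin.snocEquiv (fun _ : Fin (t+2) => V)) F]
  rw [Fintype.sum_prod_type]
  rw [Finset.sum_comm]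
  apply Finset.sum_congr rfl
  intro g _
  apply Finset.sum_congr rfl
  intro v _
  rfl

lemma law_snoc (x : V) (t : ℕ) (g : Fin (t+1) → V) (v : V) :
    lazyWalkLaw G x (t+1) (Fin.snoc g v)
      = lazyWalkLaw G x t g * lazyStep G (g (Fin.last t)) v := by
  unfold lazyWalkLaw
  have h0 : (Fin.snoc g v : Fin (t+2) → V) 0 = g 0 := by
    have : (0 : Fin (t+2)) = Fin.castSucc (0 : Fin (t+1)) := rfl
    rw [this, Fin.snoc_castSucc]
  rw [h0]
  have hprod : ∏ i : Fin (t+1), lazyStep G ((Fin.snoc g v : Fin (t+2) → V) i.castSucc)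
      ((Fin.snoc g v : Fin (t+2) → V) i.succ)
      = (∏ i : Fin t, lazyStep G (g i.castSucc) (g i.succ)) * lazyStep G (g (Fin.last t)) v := by
    rw [Fin.prod_univ_castSucc]
    congr 1
    · apply Finset.prod_congr rfl
      intro j _
      congr 1
      · rw [Fin.snoc_castSucc]
      · rw [Fin.succ_castSucc, Fin.snoc_castSucc]
    · congr 1
      · rw [Fin.snoc_castSucc]
      · rw [Fin.succ_last, Fin.snoc_last]
  rw [hprod]
  ring

lemma marginal (hrow : ∀ u : V, ∑ v, lazyStep G u v = 1) (x : V) :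
    ∀ (t : ℕ) (i : Fin (t+1)) (y : V),
    ∑ f : Fin (t+1) → V, lazyWalkLaw G x t f * (if f i = y then 1 else 0)
      = ((lazyMatrix G)^(i : ℕ)) x y := by
  intro t
  induction t with
  | zero =>
    intro i y
    have hi : i = 0 := Subsingleton.elim (α := Fin 1) i 0
    subst hi
    rw [← Equiv.sum_comp (Equiv.funUnique (Fin 1) V).symm]
    have key : ∀ v : V, lazyWalkLaw G x 0 ((Equiv.funUnique (Fin 1) V).symm v)
          * (if ((Equiv.funUnique (Fin 1) V).symm v) 0 = y then 1 else 0)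
        = (if v = x then (1:ℝ) else 0) * (if v = y then 1 else 0) := by
      intro v
      unfold lazyWalkLaw
      simp
    rw [Finset.sum_congr rfl (fun v _ => key v)]
    have : ∑ v : V, (if v = x then (1:ℝ) else 0) * (if v = y then 1 else 0)
        = if x = y then 1 else 0 := by
      rw [Finset.sum_congr rfl (fun v (_ : v ∈ univ) => by
        rw [ite_mul, zero_mul, one_mul] :
        ∀ v ∈ univ, (if v = x then (1:ℝ) else 0) * (if v = y then 1 else 0)
          = if v = x then (if v = y then (1:ℝ) else 0) else 0)]
      rw [Finset.sum_ite_eq' univ x (fun v => if v = y then (1:ℝ) else 0)]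
      simp
    rw [this]
    simp [Matrix.one_apply]
  | succ t ih =>
    intro i y
    rw [sum_snoc_decomp]
    by_cases hlast : i = Fin.last (t+1)
    · subst hlast
      have key : ∀ (g : Fin (t+1) → V),
          ∑ v : V, lazyWalkLaw G x (t+1) (Fin.snoc g v)
            * (if (Fin.snoc g v : Fin (t+2) → V) (Fin.last (t+1)) = y then 1 else 0)
          = lazyWalkLaw G x t g * lazyStep G (g (Fin.last t)) y := by
        intro g
        have e1 : ∀ v : V, lazyWalkLaw G x (t+1) (Fin.snoc g v)
            * (if (Fin.snoc g v : Fin (t+2) → V) (Fin.last (t+1)) = y then 1 else 0)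
            = lazyWalkLaw G x t g * (if v = y then lazyStep G (g (Fin.last t)) v else 0) := by
          intro v
          rw [law_snoc, Fin.snoc_last]
          split_ifs <;> ring
        rw [Finset.sum_congr rfl (fun v _ => e1 v), ← Finset.mul_sum]
        rw [Finset.sum_ite_eq' univ y (fun v => lazyStep G (g (Fin.last t)) v)]
        simp
      rw [Finset.sum_congr rfl (fun g _ => key g)]
      have e2 : ∀ g : Fin (t+1) → V, lazyWalkLaw G x t g * lazyStep G (g (Fin.last t)) y
          = ∑ z : V, (lazyWalkLaw G x t g * (if g (Fin.last t) = z then 1 else 0))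
            * lazyStep G z y := by
        intro g
        rw [Finset.sum_congr rfl (fun z (_ : z ∈ univ) => by
          rw [mul_ite, mul_one, mul_zero, ite_mul, zero_mul] :
          ∀ z ∈ univ, (lazyWalkLaw G x t g * (if g (Fin.last t) = z then 1 else 0))
            * lazyStep G z y
            = if g (Fin.last t) = z then lazyWalkLaw G x t g * lazyStep G z y else 0)]
        rw [Finset.sum_ite_eq univ (g (Fin.last t))
          (fun z => lazyWalkLaw G x t g * lazyStep G z y)]
        simp
      rw [Finset.sum_congr rfl (fun g _ => e2 g), Finset.sum_comm]
      have e3 : ∀ z : V,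
          ∑ g : Fin (t+1) → V, (lazyWalkLaw G x t g * (if g (Fin.last t) = z then 1 else 0))
            * lazyStep G z y
          = ((lazyMatrix G)^t) x z * lazyStep G z y := by
        intro z
        rw [← Finset.sum_mul]
        congr 1
        have := ih (Fin.last t) z
        simp only [Fin.val_last] at this
        exact this
      rw [Finset.sum_congr rfl (fun z _ => e3 z)]
      have : ((Fin.last (t+1) : Fin (t+2)) : ℕ) = t + 1 := Fin.val_last _
      rw [this, pow_succ, Matrix.mul_apply]
      rfl
    · obtain ⟨j, hj⟩ : ∃ j : Fin (t+1), i = j.castSucc := by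
        rcases Fin.eq_castSucc_or_eq_last i with h | h
        · exact h
        · exact absurd h hlast
      subst hj
      have key : ∀ (g : Fin (t+1) → V),
          ∑ v : V, lazyWalkLaw G x (t+1) (Fin.snoc g v)
            * (if (Fin.snoc g v : Fin (t+2) → V) j.castSucc = y then 1 else 0)
          = lazyWalkLaw G x t g * (if g j = y then 1 else 0) := by
        intro g
        have e1 : ∀ v : V, lazyWalkLaw G x (t+1) (Fin.snoc g v)
            * (if (Fin.snoc g v : Fin (t+2) → V) j.castSucc = y then 1 else 0)
            = (lazyWalkLaw G x t g * (if g j = y then 1 else 0))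
              * lazyStep G (g (Fin.last t)) v := by
          intro v
          rw [law_snoc, Fin.snoc_castSucc]
          ring
        rw [Finset.sum_congr rfl (fun v _ => e1 v), ← Finset.mul_sum,
          hrow, mul_one]
      rw [Finset.sum_congr rfl (fun g _ => key g)]
      have := ih j y
      rw [this]
      congr 1

lemma expectation_identity (hrow : ∀ u : V, ∑ v, lazyStep G u v = 1) (x y : V) (t : ℕ) :
    lazyWalkExp G x t (fun f => (visits y f : ℝ))
      = ∑ i ∈ Finset.range (t + 1), ((lazyMatrix G) ^ i) x y := by
  unfold lazyWalkExp
  have e1 : ∀ f : Fin (t+1) → V, lazyWalkLaw G x t f * ((visits y f : ℕ) : ℝ)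
      = ∑ i : Fin (t+1), lazyWalkLaw G x t f * (if f i = y then 1 else 0) := by
    intro f
    rw [visits_eq_sum, Finset.mul_sum]
  rw [Finset.sum_congr rfl (fun f _ => e1 f), Finset.sum_comm]
  rw [Finset.sum_congr rfl (fun i (_ : i ∈ univ) => marginal G hrow x t i y)]
  exact Fin.sum_univ_eq_sum_range (fun i => ((lazyMatrix G) ^ i) x y) (t+1)

end PartVIII


/-- there is a constant `β > 0` such that for every finite simple connected
graph with minimum degree at least 1, every `x`, `y` and every `t ≤ β·m²`, the expected
number of visits to `y` of the lazy walk of length `t` from `x` equals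
`∑_{i=0}^t Q^i(x,y)` and is at most `8·d(y)·√(t+1)`. -/
theorem statement_0 :
    ∃ β : ℝ, 0 < β ∧
      ∀ (V : Type) [Fintype V] [DecidableEq V] (G : SimpleGraph V) [DecidableRel G.Adj],
        G.Connected → (∀ v : V, 1 ≤ G.degree v) →
        ∀ x y : V, ∀ t : ℕ,
          (t : ℝ) ≤ β * (G.edgeFinset.card : ℝ) ^ 2 →
          lazyWalkExp G x t (fun f => (visits y f : ℝ)) =
              ∑ i ∈ Finset.range (t + 1), ((lazyMatrix G) ^ i) x y ∧
            lazyWalkExp G x t (fun f => (visits y f : ℝ)) ≤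
              8 * (G.degree y : ℝ) * Real.sqrt (t + 1) := by
  refine ⟨1, one_pos, ?_⟩
  intro V _ _ G _ hconn hdeg x y t ht
  rw [one_mul] at ht
  have hid := expectation_identity G (lazyStep_rowsum G hdeg) x y t
  refine ⟨hid, ?_⟩
  rw [hid]
  exact green_bound G hconn hdeg x y t ht
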